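/- For the Laplacian L = D(I − Wᵀ) of a strongly connected weighted directed graph, any vertex s0, and any κ0 > 0, the matrix L + κ0·e_{s0}·e_{s0}ᵀ is invertible and its inverse equals L⁺ − (1/q_{s0})·(L⁺e_{s0})·qᵀ − 1·(e_{s0}ᵀL⁺) + (1/κ0 + (L⁺)_{s0,s0})·(1/q_{s0})·1·qᵀ, where q = D⁻¹π. -/
import Mathlib


open Matrix BigOperators

section Helpers
variable {n : ℕ}

lemma vmv_mul (a b : Fin n → ℝ) (C : Matrix (Fin n) (Fin n) ℝ) :
    vecMulVec a b * C = vecMulVec a (b ᵥ* C) := by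
  ext i j
  simp [Matrix.mul_apply, Matrix.vecMulVec_apply, Matrix.vecMul, dotProduct,
    Finset.mul_sum, mul_assoc]

lemma mul_vmv (a b : Fin n → ℝ) (C : Matrix (Fin n) (Fin n) ℝ) :
    C * vecMulVec a b = vecMulVec (C.mulVec a) b := by
  ext i j
  simp [Matrix.mul_apply, Matrix.vecMulVec_apply, Matrix.mulVec, dotProduct,
    Finset.sum_mul, mul_assoc]

lemma vmv_mulVec (a b x : Fin n → ℝ) :
    (vecMulVec a b).mulVec x = (b ⬝ᵥ x) • a := by
  ext i
  simp [Matrix.mulVec, Matrix.vecMulVec_apply, dotProduct, Finset.mul_sum,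
    Finset.sum_mul, mul_assoc, mul_comm, mul_left_comm]

lemma vecMul_vmv (x a b : Fin n → ℝ) :
    x ᵥ* vecMulVec a b = (x ⬝ᵥ a) • b := by
  ext j
  simp [Matrix.vecMul, Matrix.vecMulVec_apply, dotProduct, Finset.sum_mul, mul_assoc]

lemma vmv_zero (a : Fin n → ℝ) : vecMulVec a (0 : Fin n → ℝ) = 0 := by
  ext i j; simp [Matrix.vecMulVec_apply]

lemma vmv_sub (a b c : Fin n → ℝ) :
    vecMulVec a (b - c) = vecMulVec a b - vecMulVec a c := by
  ext i j; simp [Matrix.vecMulVec_apply, mul_sub]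

lemma vmv_smul (a b : Fin n → ℝ) (r : ℝ) :
    vecMulVec a (r • b) = r • vecMulVec a b := by
  ext i j; simp [Matrix.vecMulVec_apply]; ring

lemma smul_vmv (a b : Fin n → ℝ) (r : ℝ) :
    vecMulVec (r • a) b = r • vecMulVec a b := by
  ext i j; simp [Matrix.vecMulVec_apply]; ring

end Helpers

/-- The four Penrose equations characterizing the Moore–Penrose pseudoinverse. -/
def Penrose {m : Type*} [Fintype m] (M Mp : Matrix m m ℝ) : Prop :=
  M * Mp * M = M ∧ Mp * M * Mp = Mp ∧ (M * Mp)ᵀ = M * Mp ∧ (Mp * M)ᵀ = Mp * M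

/-- for the Laplacian `L = D(I − Wᵀ)` of a strongly connected weighted
directed graph, any vertex `s0` and any `κ0 > 0`, the matrix `L + κ0 e_{s0} e_{s0}ᵀ`
is invertible and
`(L + κ0 e_{s0} e_{s0}ᵀ)⁻¹ = L⁺ − (1/q_{s0}) (L⁺ e_{s0}) qᵀ − 1 (e_{s0}ᵀ L⁺)
  + (1/κ0 + (L⁺)_{s0,s0}) (1/q_{s0}) 1 qᵀ`, where `q = D⁻¹π`. -/
theorem stmt17
    (n : ℕ) (hn : 2 ≤ n)
    (A : Matrix (Fin n) (Fin n) ℝ)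
    (hA : ∀ u v, 0 ≤ A u v)
    (hconn : ∀ u v : Fin n, Relation.ReflTransGen (fun a b => 0 < A a b) u v)
    (d : Fin n → ℝ) (hd : d = fun u => ∑ v, A u v) (hdpos : ∀ u, 0 < d u)
    (W : Matrix (Fin n) (Fin n) ℝ)
    (hW : W = Aᵀ * Matrix.diagonal (fun u => (d u)⁻¹))
    (pdist : Fin n → ℝ) (hppos : ∀ v, 0 < pdist v) (hpsum : ∑ v, pdist v = 1)
    (hpstat : W.mulVec pdist = pdist)
    (L : Matrix (Fin n) (Fin n) ℝ) (hL : L = Matrix.diagonal d * (1 - Wᵀ))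
    -- `q = D⁻¹ π`:
    (q : Fin n → ℝ) (hq : q = fun v => (d v)⁻¹ * pdist v)
    -- kernel assumptions (hold by strong connectivity):
    (hker1 : ∀ x : Fin n → ℝ, L.mulVec x = 0 ↔ ∃ c : ℝ, x = fun _ => c)
    (hker2 : ∀ y : Fin n → ℝ, Lᵀ.mulVec y = 0 ↔ ∃ c : ℝ, y = c • q)
    (Lplus : Matrix (Fin n) (Fin n) ℝ) (hLplus : Penrose L Lplus)
    (s0 : Fin n) (κ0 : ℝ) (hκ0 : 0 < κ0) :
    IsUnit (L + κ0 • Matrix.vecMulVec (Pi.single s0 (1 : ℝ))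
        (Pi.single s0 (1 : ℝ))).det ∧
    (L + κ0 • Matrix.vecMulVec (Pi.single s0 (1 : ℝ)) (Pi.single s0 (1 : ℝ)))⁻¹ =
      Lplus
        - (q s0)⁻¹ • Matrix.vecMulVec (Lplus.mulVec (Pi.single s0 (1 : ℝ))) q
        - Matrix.vecMulVec (fun _ => (1 : ℝ)) (fun j => Lplus s0 j)
        + ((κ0⁻¹ + Lplus s0 s0) * (q s0)⁻¹) •
            Matrix.vecMulVec (fun _ => (1 : ℝ)) q := by
  obtain ⟨hP1, hP2, hP3, hP4⟩ := hLplus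
  set e : Fin n → ℝ := Pi.single s0 1 with he
  set u : Fin n → ℝ := fun _ => 1 with hu
  have hnR : (0:ℝ) < (n:ℝ) := by
    have : (0:ℕ) < n := by omega
    exact_mod_cast this
  have hnne : (n:ℝ) ≠ 0 := ne_of_gt hnR
  have hqs : 0 < q s0 := by
    rw [hq]
    exact mul_pos (inv_pos.mpr (hdpos s0)) (hppos s0)
  have hqsne : q s0 ≠ 0 := ne_of_gt hqs
  have hκne : κ0 ≠ 0 := ne_of_gt hκ0
  -- L annihilates constants
  have hL1 : L.mulVec u = 0 := (hker1 u).mpr ⟨1, rfl⟩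
  -- q is a left null vector of L
  have hqL : q ᵥ* L = 0 := by
    have h := (hker2 q).mpr ⟨1, (one_smul ℝ q).symm⟩
    rw [← Matrix.mulVec_transpose]
    exact h
  -- the projection formula : Lplus * L = 1 - (1/n) 1 1ᵀ
  have hPL : Lplus * L = 1 - (n:ℝ)⁻¹ • vecMulVec u u := by
    have key : ∀ x : Fin n → ℝ,
        (Lplus * L).mulVec x = x - ((∑ i, x i) / n) • u := by
      intro x
      have h0 : L.mulVec (x - (Lplus * L).mulVec x) = 0 := by
        rw [Matrix.mulVec_sub, Matrix.mulVec_mulVec, ← Matrix.mul_assoc, hP1, sub_self]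
      obtain ⟨c, hc⟩ := (hker1 _).mp h0
      have hsum0 : ∑ i, ((Lplus * L).mulVec x) i = 0 := by
        have hvm : u ᵥ* (Lplus * L) = 0 := by
          rw [← hP4, Matrix.vecMul_transpose, ← Matrix.mulVec_mulVec, hL1,
            Matrix.mulVec_zero]
        have : u ⬝ᵥ ((Lplus * L).mulVec x) = (u ᵥ* (Lplus * L)) ⬝ᵥ x :=
          Matrix.dotProduct_mulVec u _ x
        rw [hvm, zero_dotProduct] at this
        simpa [dotProduct, hu] using this
      have hsum : ∑ i, (x i - ((Lplus * L).mulVec x) i) = (n:ℝ) * c := by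
        have := congrArg (fun v : Fin n → ℝ => ∑ i, v i) hc
        simpa [Pi.sub_apply, Finset.sum_const, Finset.card_univ, nsmul_eq_mul] using this
      have hcval : c = (∑ i, x i) / n := by
        rw [Finset.sum_sub_distrib, hsum0, sub_zero] at hsum
        field_simp [hnne] at hsum ⊢
        linarith
      have hc' : (Lplus * L).mulVec x = x - (fun _ => c) := by
        have := hc
        funext i
        have := congrFun hc i
        simp only [Pi.sub_apply] at this ⊢
        linarith
      rw [hc', hcval]
      funext i
      simp [hu, div_eq_mul_inv]
    ext i j
    have := congrFun (key (Pi.single j 1)) i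
    have hsingle : ∑ k, Pi.single j (1:ℝ) k = 1 := by simp
    rw [hsingle] at this
    have hmv : ((Lplus * L).mulVec (Pi.single j 1)) i = (Lplus * L) i j := by
      simp [Matrix.mulVec_single]
    rw [hmv] at this
    rw [this]
    simp [Matrix.one_apply, Matrix.vecMulVec_apply, hu, Pi.single_apply, div_eq_mul_inv]
  -- the candidate inverse
  set B : Matrix (Fin n) (Fin n) ℝ :=
    Lplus - (q s0)⁻¹ • vecMulVec (Lplus.mulVec e) q
      - vecMulVec u (fun j => Lplus s0 j)
      + ((κ0⁻¹ + Lplus s0 s0) * (q s0)⁻¹) • vecMulVec u q with hB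
  have hrowS : (fun j => Lplus s0 j) = e ᵥ* Lplus := by
    funext j
    simp [Matrix.vecMul, dotProduct, he, Pi.single_apply]
  have hue : u ⬝ᵥ e = 1 := by simp [dotProduct, hu, he]
  have heu : e ⬝ᵥ u = 1 := by simp [dotProduct, hu, he]
  have hqe : q ⬝ᵥ e = q s0 := by simp [dotProduct, he, Pi.single_apply]
  have hrowSe : (fun j => Lplus s0 j) ⬝ᵥ e = Lplus s0 s0 := by
    simp [dotProduct, he, Pi.single_apply]
  -- B * L = 1 - u eᵀ
  have hrowSL : (fun j => Lplus s0 j) ᵥ* L = e - (n:ℝ)⁻¹ • u := by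
    rw [hrowS, Matrix.vecMul_vecMul, hPL, Matrix.vecMul_sub, Matrix.vecMul_one,
      ← vmv_smul, vecMul_vmv, heu, one_smul]
  have hBL : B * L = 1 - vecMulVec u e := by
    rw [hB, add_mul, sub_mul, sub_mul, Matrix.smul_mul, Matrix.smul_mul,
      vmv_mul, vmv_mul, vmv_mul, hqL, vmv_zero, vmv_zero, hPL, hrowSL, vmv_sub,
      vmv_smul]
    simp only [smul_zero, add_zero, zero_add, sub_zero]
    abel
  -- B *ᵥ e = κ0⁻¹ • u
  have hBe : B.mulVec e = κ0⁻¹ • u := by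
    rw [hB, Matrix.add_mulVec, Matrix.sub_mulVec, Matrix.sub_mulVec,
      Matrix.smul_mulVec, Matrix.smul_mulVec, vmv_mulVec, vmv_mulVec,
      vmv_mulVec, hqe, hrowSe]
    funext i
    simp only [Pi.add_apply, Pi.sub_apply, Pi.smul_apply, smul_eq_mul, hu]
    field_simp
    ring
  -- left inverse
  have hBM : B * (L + κ0 • vecMulVec e e) = 1 := by
    rw [Matrix.mul_add, hBL, Matrix.mul_smul, mul_vmv, hBe, smul_vmv,
      smul_smul, mul_inv_cancel₀ hκne, one_smul]
    abel
  exact ⟨Matrix.isUnit_det_of_left_inverse hBM, Matrix.inv_eq_left_inv hBM⟩
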